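/- Let P ⊆ ℝᵈ be a finite point set realizing a lower bound L(ε) for the size of weak ε-nets (i.e., every weak ε-net for P has size at least L(ε)). Let S be the family of convex hulls of all subsets of P of size at least ε|P|. Then S satisfies the (p, d+1)-condition with p = ⌈1 + d/ε⌉, and every transversal of S has size at least L(ε). -/
import Mathlib


open scoped Classical

/-- Lower-bound construction: let `P ⊆ ℝᵈ` be a finite point set for which every weak
`ε`-net has size at least `L`, and let `𝒮` be the family of convex hulls of all
subsets of `P` of size at least `ε|P|`. Then `𝒮` satisfies the `(p, d+1)`-condition
with `p = ⌈1 + d/ε⌉`, and every transversal of `𝒮` has size at least `L`. -/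
theorem stmt_15 {d : ℕ} (hd : 1 ≤ d) (P : Finset (EuclideanSpace ℝ (Fin d)))
    (hP : P.Nonempty) (ε : ℝ) (hε0 : 0 < ε) (hε1 : ε ≤ 1) (L : ℝ)
    (hlow : ∀ M : Finset (EuclideanSpace ℝ (Fin d)),
      (∀ C : Set (EuclideanSpace ℝ (Fin d)), Convex ℝ C →
        ε * (P.card : ℝ) ≤ ((P.filter (fun x => x ∈ C)).card : ℝ) → (C ∩ ↑M).Nonempty) →
      L ≤ (M.card : ℝ)) :
    (∀ f : Fin ⌈1 + (d : ℝ) / ε⌉₊ → Set (EuclideanSpace ℝ (Fin d)),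
      (∀ i, ∃ A : Finset (EuclideanSpace ℝ (Fin d)), A ⊆ P ∧
          ε * (P.card : ℝ) ≤ (A.card : ℝ) ∧ f i = convexHull ℝ ↑A) →
      ∃ I : Finset (Fin ⌈1 + (d : ℝ) / ε⌉₊), I.card = d + 1 ∧ (⋂ i ∈ I, f i).Nonempty) ∧
    (∀ M : Finset (EuclideanSpace ℝ (Fin d)),
      (∀ A : Finset (EuclideanSpace ℝ (Fin d)), A ⊆ P →
        ε * (P.card : ℝ) ≤ (A.card : ℝ) → ((convexHull ℝ (↑A : Set (EuclideanSpace ℝ (Fin d)))) ∩ ↑M).Nonempty) →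
      L ≤ (M.card : ℝ)) := by
  constructor
  · intro f hf
    choose A hAP hAcard hAf using hf
    have hsum : ∑ i, (A i).card
        = ∑ x ∈ P, (Finset.univ.filter fun i => x ∈ A i).card := by
      have h1 : ∀ i, (A i).card = (P.filter fun x => x ∈ A i).card := by
        intro i
        congr 1
        ext x
        simp only [Finset.mem_filter]
        exact ⟨fun h => ⟨hAP i h, h⟩, And.right⟩
      simp only [h1, Finset.card_filter]
      rw [Finset.sum_comm]
    have hPpos : (0 : ℝ) < P.card := by
      exact_mod_cast Finset.card_pos.mpr hP
    by_cases hall : ∀ x ∈ P, (Finset.univ.filter fun i => x ∈ A i).card ≤ d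
    · exfalso
      have h2n : ∑ i, (A i).card ≤ d * P.card := by
        rw [hsum]
        calc ∑ x ∈ P, (Finset.univ.filter fun i => x ∈ A i).card
            ≤ ∑ _x ∈ P, d := Finset.sum_le_sum hall
          _ = P.card * d := Finset.sum_const d
          _ = d * P.card := Nat.mul_comm _ _
      have h2 : ((∑ i, (A i).card : ℕ) : ℝ) ≤ (d : ℝ) * P.card := by
        exact_mod_cast h2n
      have h3 : (⌈1 + (d : ℝ) / ε⌉₊ : ℝ) * (ε * P.card)
          ≤ ((∑ i, (A i).card : ℕ) : ℝ) := by
        push_cast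
        calc (⌈1 + (d : ℝ) / ε⌉₊ : ℝ) * (ε * P.card)
            = ∑ _i : Fin ⌈1 + (d : ℝ) / ε⌉₊, ε * P.card := by
              rw [Finset.sum_const]; simp [mul_comm]
          _ ≤ ∑ i, ((A i).card : ℝ) := Finset.sum_le_sum (fun i _ => hAcard i)
      have h4 : (1 + (d : ℝ) / ε) ≤ (⌈1 + (d : ℝ) / ε⌉₊ : ℝ) := Nat.le_ceil _
      have h5 : ε + (d : ℝ) ≤ (⌈1 + (d : ℝ) / ε⌉₊ : ℝ) * ε := by
        have := mul_le_mul_of_nonneg_right h4 hε0.le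
        calc ε + (d : ℝ) = (1 + (d : ℝ) / ε) * ε := by field_simp
          _ ≤ _ := this
      nlinarith
    · push_neg at hall
      obtain ⟨x, hxP, hx⟩ := hall
      have hx' : d + 1 ≤ (Finset.univ.filter fun i => x ∈ A i).card := hx
      obtain ⟨I, hI, hIcard⟩ := Finset.exists_subset_card_eq hx'
      refine ⟨I, hIcard, x, ?_⟩
      simp only [Set.mem_iInter]
      intro i hi
      rw [hAf i]
      exact subset_convexHull ℝ _ (Finset.mem_filter.mp (hI hi)).2
  · intro M hM
    apply hlow
    intro C hC hcard
    obtain ⟨y, hy1, hy2⟩ := hM (P.filter fun x => x ∈ C) (Finset.filter_subset _ _) hcard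
    refine ⟨y, ?_, hy2⟩
    have hsub : convexHull ℝ (↑(P.filter fun x => x ∈ C) : Set _) ⊆ C := by
      apply convexHull_min _ hC
      intro z hz
      exact (Finset.mem_filter.mp (by exact_mod_cast hz)).2
    exact hsub hy1
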